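/- Let Ξ be an x-tower site in F^2 with μ points and let S_x(Ξ) be its associated staircase. Then dim_F (F[x,y] / I(Ξ)) = μ = #S_x(Ξ), and the images of the monomials x^i y^j for (i,j) ∈ S_x(Ξ) form an F-vector space basis of F[x,y]/I(Ξ). -/

import Mathlib

open MvPolynomial

noncomputable def vanishingIdeal {F : Type*} [Field F] (Ξ : Set (F × F)) :
    Ideal (MvPolynomial (Fin 2) F) :=
  ⨅ ξ ∈ Ξ, RingHom.ker (eval (fun i : Fin 2 => if i = 0 then ξ.1 else ξ.2) :
    MvPolynomial (Fin 2) F →+* F)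

def towerIndex (ν : ℕ) (m : ℕ → ℕ) : Finset (ℕ × ℕ) :=
  ((Finset.range (m 0 + 1)) ×ˢ Finset.range (ν + 1)).filter (fun p => p.1 ≤ m p.2)

lemma exists_coeff_ne_zero'' {R : Type*} [Semiring R] {p : Polynomial R} (h : p ≠ 0) :
    ∃ n, p.coeff n ≠ 0 := by
  by_contra hc
  push_neg at hc
  exact h (Polynomial.ext fun n => by simp [hc n])

open Polynomial in
/-- A polynomial over `F[x]` whose `y^j`-coefficients have `x`-degree `≤ m j` (staircase
support) and which vanishes at all points of an x-tower site is zero. -/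
lemma tower_poly_zero {F : Type*} [Field F] (ν : ℕ) :
    ∀ (m : ℕ → ℕ) (y : ℕ → F) (xs : ℕ → ℕ → F),
    (∀ j k, j < k → k ≤ ν → m k < m j) →
    (∀ j k, j ≤ ν → k ≤ ν → y j = y k → j = k) →
    (∀ j s t, j ≤ ν → s ≤ m j → t ≤ m j → xs s j = xs t j → s = t) →
    ∀ f : Polynomial (Polynomial F),
    (∀ j i, (f.coeff j).coeff i ≠ 0 → j ≤ ν ∧ i ≤ m j) →
    (∀ j, j ≤ ν → ∀ i, i ≤ m j → (Polynomial.eval (xs i j) (Polynomial.eval (Polynomial.C (y j)) f)) = 0) →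
    f = 0 := by
  classical
  induction ν with
  | zero =>
    intro m y xs hm hy hx f hdeg hvan
    -- f is a constant in y
    have hfc : f.natDegree ≤ 0 := by
      rw [natDegree_le_iff_coeff_eq_zero]
      intro N hN
      by_contra h
      obtain ⟨i, hi⟩ := exists_coeff_ne_zero'' h
      exact absurd (hdeg N i hi).1 (by omega)
    have hf : f = Polynomial.C (f.coeff 0) := Polynomial.eq_C_of_natDegree_le_zero hfc
    have ha : f.coeff 0 = 0 := by
      apply Polynomial.eq_zero_of_natDegree_lt_card_of_eval_eq_zero' _
        ((Finset.range (m 0 + 1)).image (fun i => xs i 0))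
      · intro x hx'
        simp only [Finset.mem_image, Finset.mem_range] at hx'
        obtain ⟨i, hi, rfl⟩ := hx'
        have := hvan 0 le_rfl i (by omega)
        rwa [hf, Polynomial.eval_C] at this
      · rw [Finset.card_image_of_injOn]
        · have : (f.coeff 0).natDegree ≤ m 0 := by
            rw [natDegree_le_iff_coeff_eq_zero]
            intro N hN
            by_contra h
            exact absurd (hdeg 0 N h).2 (by omega)
          rw [Finset.card_range]; omega
        · intro s hs t ht hst
          simp only [Finset.mem_coe, Finset.mem_range] at hs ht
          exact hx 0 s t le_rfl (by omega) (by omega) hst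
    rw [hf, ha, map_zero]
  | succ N ih =>
    intro m y xs hm hy hx f hdeg hvan
    by_cases hf0 : f = 0
    · exact hf0
    -- f vanishes identically at y = y 0
    have hroot : f.eval (Polynomial.C (y 0)) = 0 := by
      apply Polynomial.eq_zero_of_natDegree_lt_card_of_eval_eq_zero' _
        ((Finset.range (m 0 + 1)).image (fun i => xs i 0))
      · intro x hx'
        simp only [Finset.mem_image, Finset.mem_range] at hx'
        obtain ⟨i, hi, rfl⟩ := hx'
        exact hvan 0 (by omega) i (by omega)
      · rw [Finset.card_image_of_injOn]
        · have hdle : (f.eval (Polynomial.C (y 0))).natDegree ≤ m 0 := by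
            rw [Polynomial.eval_eq_sum_range]
            apply Polynomial.natDegree_sum_le_of_forall_le
            intro j hj
            by_cases h : f.coeff j = 0
            · simp [h]
            · obtain ⟨i, hi⟩ := exists_coeff_ne_zero'' h
              have hj1 := (hdeg j i hi).1
              have hmj : m j ≤ m 0 := by
                rcases Nat.eq_zero_or_pos j with h0 | h0
                · simp [h0]
                · exact le_of_lt (hm 0 j h0 hj1)
              have h1 : (f.coeff j).natDegree ≤ m j := by
                rw [natDegree_le_iff_coeff_eq_zero]
                intro nn hnn
                by_contra hcc
                exact absurd (hdeg j nn hcc).2 (by omega)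
              calc (f.coeff j * Polynomial.C (y 0) ^ j).natDegree
                  ≤ (f.coeff j).natDegree + (Polynomial.C (y 0) ^ j).natDegree :=
                    Polynomial.natDegree_mul_le
                _ ≤ m 0 := by
                    have : (Polynomial.C (y 0) ^ j).natDegree = 0 := by
                      simp [Polynomial.natDegree_pow]
                    omega
          rw [Finset.card_range]; omega
        · intro s hs t ht hst
          simp only [Finset.mem_coe, Finset.mem_range] at hs ht
          exact hx 0 s t (by omega) (by omega) (by omega) hst
    set a : Polynomial F := Polynomial.C (y 0) with ha
    set g : Polynomial (Polynomial F) := f /ₘ (Polynomial.X - Polynomial.C a) with hg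
    have hfg : (Polynomial.X - Polynomial.C a) * g = f :=
      (Polynomial.mul_divByMonic_eq_iff_isRoot).mpr hroot
    have hfdeg : f.natDegree ≤ N + 1 := by
      rw [natDegree_le_iff_coeff_eq_zero]
      intro nn hnn
      by_contra h
      obtain ⟨i, hi⟩ := exists_coeff_ne_zero'' h
      exact absurd (hdeg nn i hi).1 (by omega)
    have hgdeg : g.natDegree ≤ N := by
      rw [hg, Polynomial.natDegree_divByMonic f (Polynomial.monic_X_sub_C a)]
      rw [Polynomial.natDegree_X_sub_C]
      omega
    have hrec : ∀ k, g.coeff k = f.coeff (k + 1) + a * g.coeff (k + 1) := by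
      intro k
      have h := congrArg (fun p => Polynomial.coeff p (k + 1)) hfg
      simp only [sub_mul, Polynomial.coeff_sub, Polynomial.coeff_X_mul,
        Polynomial.coeff_C_mul] at h
      rw [← h]; ring
    have hGdeg : ∀ k i, (g.coeff k).coeff i ≠ 0 → k ≤ N ∧ i ≤ m (k + 1) := by
      have main : ∀ t k, N + 1 ≤ k + t → ∀ i, (g.coeff k).coeff i ≠ 0 →
          k + 1 ≤ N + 1 ∧ i ≤ m (k + 1) := by
        intro t
        induction t with
        | zero =>
          intro k hk i hi
          exfalso
          apply hi
          have hgk : g.coeff k = 0 :=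
            Polynomial.coeff_eq_zero_of_natDegree_lt (show g.natDegree < k by omega)
          rw [hgk]
          simp
        | succ t iht =>
          intro k hk i hi
          by_cases h : N + 1 ≤ k + t
          · exact iht k h i hi
          rw [hrec k] at hi
          rw [Polynomial.coeff_add] at hi
          rcases (by
            by_contra hcon
            push_neg at hcon
            rw [hcon.1, hcon.2, add_zero] at hi
            exact hi rfl :
            (f.coeff (k + 1)).coeff i ≠ 0 ∨ (a * g.coeff (k + 1)).coeff i ≠ 0) with h1 | h2
          · exact hdeg (k + 1) i h1
          · rw [ha, Polynomial.coeff_C_mul] at h2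
            have h3 : (g.coeff (k + 1)).coeff i ≠ 0 := fun hc => h2 (by rw [hc, mul_zero])
            obtain ⟨h4, h5⟩ := iht (k + 1) (by omega) i h3
            exact ⟨by omega, le_of_lt (lt_of_le_of_lt h5 (hm (k + 1) (k + 2) (by omega) h4))⟩
      intro k i hi
      obtain ⟨h1, h2⟩ := main (N + 1) k (by omega) i hi
      exact ⟨by omega, h2⟩
    have hGvan : ∀ j, j ≤ N → ∀ i, i ≤ m (j + 1) →
        ((g.eval (Polynomial.C (y (j + 1)))).eval (xs i (j + 1))) = 0 := by
      intro j hj i hi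
      have h0 := hvan (j + 1) (by omega) i hi
      rw [← hfg] at h0
      rw [Polynomial.eval_mul, Polynomial.eval_mul, Polynomial.eval_sub,
        Polynomial.eval_X, Polynomial.eval_C, ha, Polynomial.eval_sub,
        Polynomial.eval_C, Polynomial.eval_C] at h0
      rcases mul_eq_zero.mp h0 with h1 | h2
      · exfalso
        have : y (j + 1) = y 0 := by
          have := sub_eq_zero.mp h1
          exact this
        exact absurd (hy (j + 1) 0 (by omega) (by omega) this) (by omega)
      · exact h2
    have hgz : g = 0 := by
      apply ih (fun j => m (j + 1)) (fun j => y (j + 1)) (fun i j => xs i (j + 1))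
      · intro j k hjk hk; exact hm (j + 1) (k + 1) (by omega) (by omega)
      · intro j k hj hk h; have := hy (j + 1) (k + 1) (by omega) (by omega) h; omega
      · intro j s t hj hs ht h; exact hx (j + 1) s t (by omega) hs ht h
      · exact hGdeg
      · exact hGvan
    rw [← hfg, hgz, mul_zero]

lemma tower_matrix_inj {F : Type*} [Field F] (ν : ℕ) (m : ℕ → ℕ) (y : ℕ → F) (xs : ℕ → ℕ → F)
    (hm : ∀ j k, j < k → k ≤ ν → m k < m j)
    (hy : ∀ j k, j ≤ ν → k ≤ ν → y j = y k → j = k)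
    (hx : ∀ j s t, j ≤ ν → s ≤ m j → t ≤ m j → xs s j = xs t j → s = t)
    (c : ℕ × ℕ → F)
    (hc : ∀ j, j ≤ ν → ∀ t, t ≤ m j →
      ∑ p ∈ towerIndex ν m, c p * xs t j ^ p.1 * y j ^ p.2 = 0) :
    ∀ p ∈ towerIndex ν m, c p = 0 := by
  classical
  set f : Polynomial (Polynomial F) :=
    ∑ p ∈ towerIndex ν m, Polynomial.monomial p.2 (Polynomial.monomial p.1 (c p)) with hf
  have hcoe : ∀ j i, (f.coeff j).coeff i =
      if (i, j) ∈ towerIndex ν m then c (i, j) else 0 := by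
    intro j i
    rw [hf, Polynomial.finset_sum_coeff]
    have : ∀ p ∈ towerIndex ν m,
        ((Polynomial.monomial p.2 (Polynomial.monomial p.1 (c p))).coeff j).coeff i =
        if p = (i, j) then c p else 0 := by
      intro p _
      rw [Polynomial.coeff_monomial]
      rcases p with ⟨pi, pj⟩
      split_ifs with h1 h2 h2 <;>
        simp_all [Polynomial.coeff_monomial, Prod.ext_iff]
    calc (∑ p ∈ towerIndex ν m,
          ((Polynomial.monomial p.2 (Polynomial.monomial p.1 (c p))).coeff j)).coeff i
        = ∑ p ∈ towerIndex ν m,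
          ((Polynomial.monomial p.2 (Polynomial.monomial p.1 (c p))).coeff j).coeff i := by
          rw [Polynomial.finset_sum_coeff]
      _ = ∑ p ∈ towerIndex ν m, if p = (i, j) then c p else 0 :=
          Finset.sum_congr rfl this
      _ = if (i, j) ∈ towerIndex ν m then c (i, j) else 0 := Finset.sum_ite_eq' _ _ _
  have hdeg : ∀ j i, (f.coeff j).coeff i ≠ 0 → j ≤ ν ∧ i ≤ m j := by
    intro j i h
    rw [hcoe] at h
    by_cases hmem : (i, j) ∈ towerIndex ν m
    · simp only [towerIndex, Finset.mem_filter, Finset.mem_product, Finset.mem_range] at hmem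
      exact ⟨by omega, hmem.2⟩
    · simp [hmem] at h
  have hvan : ∀ j, j ≤ ν → ∀ i, i ≤ m j →
      ((f.eval (Polynomial.C (y j))).eval (xs i j)) = 0 := by
    intro j hj t ht
    have := hc j hj t ht
    rw [hf]
    rw [Polynomial.eval_finset_sum, Polynomial.eval_finset_sum]
    rw [← this]
    apply Finset.sum_congr rfl
    intro p _
    rw [Polynomial.eval_monomial, Polynomial.eval_mul, Polynomial.eval_monomial,
      Polynomial.eval_pow, Polynomial.eval_C]
  have hfz : f = 0 := tower_poly_zero ν m y xs hm hy hx f hdeg hvan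
  intro p hp
  have := hcoe p.2 p.1
  rw [hfz] at this
  simp only [Polynomial.coeff_zero] at this
  rw [← Prod.mk.eta (p := p)] at hp ⊢
  rw [if_pos hp] at this
  exact this.symm


/-- for an x-tower site `Ξ` of `μ = ∑_{j≤ν}(m_j+1)` points,
`dim_F F[x,y]/I(Ξ) = μ = #S_x(Ξ)`, and the images of the staircase monomials
`x^i y^j`, `(i,j) ∈ S_x(Ξ)`, form an `F`-basis of the quotient. -/
theorem tower_quotient_dimension_and_basis {F : Type*} [Field F] (ν : ℕ) (m : ℕ → ℕ)
    (y : ℕ → F) (xs : ℕ → ℕ → F)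
    (hm : ∀ j k, j < k → k ≤ ν → m k < m j)
    (hy : ∀ j k, j ≤ ν → k ≤ ν → y j = y k → j = k)
    (hx : ∀ j s t, j ≤ ν → s ≤ m j → t ≤ m j → xs s j = xs t j → s = t)
    (I : Ideal (MvPolynomial (Fin 2) F))
    (hI : I = vanishingIdeal {p : F × F | ∃ j ≤ ν, ∃ i ≤ m j, p = (xs i j, y j)}) :
    Module.finrank F (MvPolynomial (Fin 2) F ⧸ I) =
        ∑ j ∈ Finset.range (ν + 1), (m j + 1) ∧
    Module.finrank F (MvPolynomial (Fin 2) F ⧸ I) = (towerIndex ν m).card ∧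
    LinearIndependent F (fun p : towerIndex ν m =>
      Ideal.Quotient.mk I (X 0 ^ (p : ℕ × ℕ).1 * X 1 ^ (p : ℕ × ℕ).2)) ∧
    Submodule.span F (Set.range (fun p : towerIndex ν m =>
      Ideal.Quotient.mk I (X 0 ^ (p : ℕ × ℕ).1 * X 1 ^ (p : ℕ × ℕ).2))) = ⊤ := by
  classical
  have hm0 : ∀ j, j ≤ ν → m j ≤ m 0 := by
    intro j hj
    rcases Nat.eq_zero_or_pos j with h | h
    · simp [h]
    · exact le_of_lt (hm 0 j h hj)
  have hmem : ∀ q : ℕ × ℕ, q ∈ towerIndex ν m ↔ q.2 ≤ ν ∧ q.1 ≤ m q.2 := by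
    intro q
    simp only [towerIndex, Finset.mem_filter, Finset.mem_product, Finset.mem_range]
    constructor
    · rintro ⟨⟨h1, h2⟩, h3⟩; exact ⟨by omega, h3⟩
    · rintro ⟨h2, h3⟩
      exact ⟨⟨by have := hm0 q.2 h2; omega, by omega⟩, h3⟩
  set v : ℕ × ℕ → (Fin 2 → F) := fun q i => if i = 0 then xs q.1 q.2 else y q.2 with hv
  have hmemI : ∀ f, f ∈ I ↔ ∀ j, j ≤ ν → ∀ i, i ≤ m j → eval (v (i, j)) f = 0 := by
    intro f
    rw [hI]
    simp only [_root_.vanishingIdeal, Ideal.mem_iInf, RingHom.mem_ker, Set.mem_setOf_eq]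
    constructor
    · intro h j hj i hi
      exact h (xs i j, y j) ⟨j, hj, i, hi, rfl⟩
    · rintro h ξ ⟨j, hj, i, hi, rfl⟩
      exact h j hj i hi
  set S := towerIndex ν m with hS
  set E : MvPolynomial (Fin 2) F →ₗ[F] (↥S → F) :=
    LinearMap.pi (fun q => (MvPolynomial.aeval (R := F) (v q.1)).toLinearMap) with hE
  have haeval : ∀ (w : Fin 2 → F) f, MvPolynomial.aeval w f = eval w f := by
    intro w f
    rw [MvPolynomial.aeval_def, Algebra.algebraMap_self]
    rfl
  have hEapp : ∀ f (q : ↥S), E f q = eval (v q.1) f := by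
    intro f q
    rw [hE]
    simp only [LinearMap.pi_apply, AlgHom.toLinearMap_apply]
    exact haeval _ f
  have hkerE : ∀ f, (∀ q : ↥S, E f q = 0) ↔ f ∈ I := by
    intro f
    rw [hmemI]
    constructor
    · intro h j hj i hi
      have hq : (i, j) ∈ S := (hmem (i, j)).mpr ⟨hj, hi⟩
      have := h ⟨(i, j), hq⟩
      rwa [hEapp] at this
    · intro h q
      rw [hEapp]
      have hq := (hmem q.1).mp q.2
      exact h q.1.2 hq.1 q.1.1 hq.2
  set mono : ↥S → MvPolynomial (Fin 2) F :=
    fun p => X 0 ^ (p : ℕ × ℕ).1 * X 1 ^ (p : ℕ × ℕ).2 with hmono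
  have hEmono : ∀ (p q : ↥S), E (mono p) q =
      xs (q : ℕ × ℕ).1 (q : ℕ × ℕ).2 ^ (p : ℕ × ℕ).1 * y (q : ℕ × ℕ).2 ^ (p : ℕ × ℕ).2 := by
    intro p q
    rw [hEapp, hmono]
    simp [hv, MvPolynomial.eval_X]
  set Φ := Fintype.linearCombination F mono with hΦ
  set L := E.comp Φ with hL
  have hLapp : ∀ c (q : ↥S), L c q =
      ∑ p : ↥S, c p * (xs (q : ℕ × ℕ).1 (q : ℕ × ℕ).2 ^ (p : ℕ × ℕ).1 *
        y (q : ℕ × ℕ).2 ^ (p : ℕ × ℕ).2) := by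
    intro c q
    rw [hL]
    simp only [LinearMap.comp_apply]
    rw [hΦ, Fintype.linearCombination_apply, map_sum, Finset.sum_apply]
    simp only [map_smul, Pi.smul_apply, smul_eq_mul]
    exact Finset.sum_congr rfl fun p _ => by rw [hEmono]
  have hLinj : Function.Injective L := by
    rw [← LinearMap.ker_eq_bot, LinearMap.ker_eq_bot']
    intro c hc
    set c' : ℕ × ℕ → F := fun p => if h : p ∈ S then c ⟨p, h⟩ else 0 with hc'
    have hz : ∀ p ∈ S, c' p = 0 := by
      apply tower_matrix_inj ν m y xs hm hy hx
      intro j hj t ht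
      have hq : (t, j) ∈ S := (hmem (t, j)).mpr ⟨hj, ht⟩
      have h1 : L c ⟨(t, j), hq⟩ = 0 := by rw [hc]; rfl
      rw [hLapp] at h1
      calc ∑ p ∈ towerIndex ν m, c' p * xs t j ^ p.1 * y j ^ p.2
          = ∑ p : ↥S, c' (p : ℕ × ℕ) * xs t j ^ (p : ℕ × ℕ).1 * y j ^ (p : ℕ × ℕ).2 :=
            (Finset.sum_coe_sort S _).symm
        _ = ∑ p : ↥S, c p * (xs t j ^ (p : ℕ × ℕ).1 * y j ^ (p : ℕ × ℕ).2) := by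
            apply Finset.sum_congr rfl
            intro p _
            simp only [hc']
            rw [dif_pos p.2, mul_assoc]
        _ = 0 := h1
    funext p
    have := hz p.1 p.2
    simp only [hc'] at this
    rwa [dif_pos p.2] at this
  have hLsurj : Function.Surjective L :=
    LinearMap.injective_iff_surjective.mp hLinj
  have hIker : ∀ q : ↥S, ∀ a ∈ I, MvPolynomial.aeval (R := F) (v q.1) a = 0 := by
    intro q a ha
    rw [haeval]
    have hq := (hmem q.1).mp q.2
    exact (hmemI a).mp ha q.1.2 hq.1 q.1.1 hq.2
  set Ebar : (MvPolynomial (Fin 2) F ⧸ I) →ₗ[F] (↥S → F) :=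
    LinearMap.pi (fun q =>
      (Ideal.Quotient.liftₐ I (MvPolynomial.aeval (v q.1)) (hIker q)).toLinearMap) with hEbar
  have hEbarmk : ∀ f (q : ↥S), Ebar (Ideal.Quotient.mk I f) q = E f q := by
    intro f q
    rw [hEbar, hE]
    simp only [LinearMap.pi_apply, AlgHom.toLinearMap_apply, Ideal.Quotient.liftₐ_apply,
      Ideal.Quotient.lift_mk]
    exact (haeval _ f).symm
  have hEbarinj : Function.Injective Ebar := by
    rw [← LinearMap.ker_eq_bot, LinearMap.ker_eq_bot']
    intro z hz
    obtain ⟨f, rfl⟩ := Ideal.Quotient.mk_surjective z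
    rw [Ideal.Quotient.eq_zero_iff_mem]
    apply (hkerE f).mp
    intro q
    rw [← hEbarmk, hz]
    rfl
  have hEbarsurj : Function.Surjective Ebar := by
    intro w
    obtain ⟨c, hcw⟩ := hLsurj w
    exact ⟨Ideal.Quotient.mk I (Φ c), by
      funext q
      rw [hEbarmk]
      exact congrFun hcw q⟩
  have hEquiv := LinearEquiv.ofBijective Ebar ⟨hEbarinj, hEbarsurj⟩
  have hfr : Module.finrank F (MvPolynomial (Fin 2) F ⧸ I) = S.card := by
    rw [hEquiv.finrank_eq, Module.finrank_fintype_fun_eq_card, Fintype.card_coe]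
  have hScard : S.card = ∑ j ∈ Finset.range (ν + 1), (m j + 1) := by
    have hbig : S = (Finset.range (ν + 1)).biUnion
        (fun j => (Finset.range (m j + 1)).image (fun i => (i, j))) := by
      ext q
      rw [hmem]
      simp only [Finset.mem_biUnion, Finset.mem_image, Finset.mem_range]
      constructor
      · rintro ⟨h2, h1⟩
        exact ⟨q.2, by omega, q.1, by omega, rfl⟩
      · rintro ⟨j, hj, i, hi, rfl⟩
        refine ⟨?_, ?_⟩ <;> simp only [Prod.fst, Prod.snd] <;> omega
    rw [hbig, Finset.card_biUnion]
    · apply Finset.sum_congr rfl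
      intro j hj
      rw [Finset.card_image_of_injective _ (fun a b h => by
        simpa using congrArg Prod.fst h), Finset.card_range]
    · intro a ha b hb hab
      simp only [Finset.disjoint_left, Finset.mem_image, Finset.mem_range]
      rintro q ⟨i, hi, rfl⟩ ⟨i', hi', h⟩
      exact hab (by simpa using (congrArg Prod.snd h).symm)
  refine ⟨by rw [hfr, hScard], hfr, ?_, ?_⟩
  · rw [Fintype.linearIndependent_iff]
    intro c hc
    have hsum : (∑ p : ↥S, c p • Ideal.Quotient.mk I (mono p)) = 0 := hc
    have hLc : L c = 0 := by
      funext q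
      rw [hLapp]
      calc ∑ p : ↥S, c p * (xs (q : ℕ × ℕ).1 (q : ℕ × ℕ).2 ^ (p : ℕ × ℕ).1 *
              y (q : ℕ × ℕ).2 ^ (p : ℕ × ℕ).2)
          = Ebar (∑ p : ↥S, c p • Ideal.Quotient.mk I (mono p)) q := by
            rw [map_sum, Finset.sum_apply]
            apply Finset.sum_congr rfl
            intro p _
            simp only [map_smul, Pi.smul_apply, smul_eq_mul]
            rw [hEbarmk, hEmono]
        _ = 0 := by rw [hsum, map_zero]; rfl
    intro i
    have := hLinj (by rw [hLc, map_zero] : L c = L 0)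
    rw [this]
    rfl
  · rw [Submodule.eq_top_iff']
    intro z
    obtain ⟨c, hcz⟩ := hLsurj (Ebar z)
    have hu : Ebar (∑ p : ↥S, c p • Ideal.Quotient.mk I (mono p)) = Ebar z := by
      funext q
      rw [map_sum, Finset.sum_apply, ← congrFun hcz q, hLapp]
      apply Finset.sum_congr rfl
      intro p _
      simp only [map_smul, Pi.smul_apply, smul_eq_mul]
      rw [hEbarmk, hEmono]
    have hz := hEbarinj hu
    rw [← hz]
    apply Submodule.sum_mem
    intro p _
    apply Submodule.smul_mem
    apply Submodule.subset_span
    exact ⟨p, rfl⟩
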